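/- The functions H₁(x,y,z) = (x² + y²)/2 + z and H₂(x,y,z) = z·e^(−y) are both first integrals of the Rössler system ẋ = −y − z, ẏ = x, ż = xz on ℝ³, and they are functionally independent. -/

import Mathlib

/-- Gradient of a function of three real variables, via partial derivatives. -/
noncomputable def grad3 (H : ℝ → ℝ → ℝ → ℝ) (x y z : ℝ) : Fin 3 → ℝ :=
  ![deriv (fun t => H t y z) x, deriv (fun t => H x t z) y, deriv (fun t => H x y t) z]

lemma deriv_exp_neg (y : ℝ) : deriv (fun x => Real.exp (-x)) y = -Real.exp (-y) := by
  have := ((Real.hasDerivAt_exp (-y)).comp y (hasDerivAt_neg y)).deriv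
  simpa [Function.comp_def] using this

theorem stmt11 :
    (∀ x y z : ℝ,
      deriv (fun t => (t ^ 2 + y ^ 2) / 2 + z) x * (-y - z) +
        deriv (fun t => (x ^ 2 + t ^ 2) / 2 + z) y * x +
        deriv (fun t => (x ^ 2 + y ^ 2) / 2 + t) z * (x * z) = 0) ∧
    (∀ x y z : ℝ,
      deriv (fun _ : ℝ => z * Real.exp (-y)) x * (-y - z) +
        deriv (fun t => z * Real.exp (-t)) y * x +
        deriv (fun t => t * Real.exp (-y)) z * (x * z) = 0) ∧
    (∃ S : Set (ℝ × ℝ × ℝ), IsOpen S ∧ Dense S ∧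
      ∀ p ∈ S, LinearIndependent ℝ
        ![grad3 (fun x y z => (x ^ 2 + y ^ 2) / 2 + z) p.1 p.2.1 p.2.2,
          grad3 (fun _ y z => z * Real.exp (-y)) p.1 p.2.1 p.2.2]) := by
  have hd1 : ∀ x y z : ℝ, deriv (fun t => (t ^ 2 + y ^ 2) / 2 + z) x = x := by
    intro x y z; simp [deriv_add, deriv_div_const]
  have hd2 : ∀ x y z : ℝ, deriv (fun t => (x ^ 2 + t ^ 2) / 2 + z) y = y := by
    intro x y z; simp [deriv_add, deriv_div_const]
  have hd3 : ∀ x y : ℝ, ∀ z : ℝ, deriv (fun t => (x ^ 2 + y ^ 2) / 2 + t) z = 1 := by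
    intro x y z; rw [deriv_const_add]; exact deriv_id z
  have he2 : ∀ y z : ℝ, deriv (fun t => z * Real.exp (-t)) y = -z * Real.exp (-y) := by
    intro y z
    rw [deriv_const_mul _ (by fun_prop), deriv_exp_neg]; ring
  have he3 : ∀ y z : ℝ, deriv (fun t : ℝ => t * Real.exp (-y)) z = Real.exp (-y) := by
    intro y z; simp
  refine ⟨?_, ?_, ?_⟩
  · intro x y z; rw [hd1, hd2, hd3]; ring
  · intro x y z; rw [he2, he3]; simp; ring
  · refine ⟨{p : ℝ × ℝ × ℝ | p.1 ≠ 0}, ?_, ?_, ?_⟩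
    · exact isOpen_compl_singleton.preimage continuous_fst
    · have h1 : Dense ({0}ᶜ : Set ℝ) := dense_compl_singleton 0
      have h2 : Dense (Set.univ : Set (ℝ × ℝ)) := dense_univ
      have := h1.prod h2
      simpa [Set.prod_eq, Set.preimage] using this
    · rintro ⟨x, y, z⟩ hx
      simp only [Set.mem_setOf_eq] at hx
      have g1 : grad3 (fun x y z => (x ^ 2 + y ^ 2) / 2 + z) x y z = ![x, y, 1] := by
        simp [grad3, hd1, hd2, hd3]
      have g2 : grad3 (fun _ y z => z * Real.exp (-y)) x y z
          = ![0, -z * Real.exp (-y), Real.exp (-y)] := by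
        simp [grad3, he2, he3]
      rw [LinearIndependent.pair_iff]
      intro s t hst
      rw [g1, g2] at hst
      have h0 : s * x = 0 := by
        have := congrFun hst 0
        simpa using this
      have hs : s = 0 := by
        rcases mul_eq_zero.1 h0 with h | h
        · exact h
        · exact absurd h hx
      have h2 : s * 1 + t * Real.exp (-y) = 0 := by
        have := congrFun hst 2
        simpa [Matrix.smul_cons] using this
      have ht : t = 0 := by
        rw [hs] at h2
        simp at h2
        exact h2
      exact ⟨hs, ht⟩
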